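/- arXiv:math/0501373 — 2 statements merged into one kernel-verified Lean document; each statement's English description precedes it below -/
import Mathlib

section
/- Let L be a complete lattice which is finitely spatial (every element is a join of join-irreducible elements), and suppose Cen(L) is a complete atomistic sublattice of L. Then L is totally decomposable. -/
universe u

/-- An element `a` of a lattice is *neutral* if every triple `{a, x, y}`
generates a distributive sublattice; we use the standard equational
characterization. -/
def IsNeutral {L : Type*} [Lattice L] (a : L) : Prop :=
  ∀ x y : L, (a ⊔ x) ⊓ (a ⊔ y) ⊓ (x ⊔ y) = (a ⊓ x) ⊔ (a ⊓ y) ⊔ (x ⊓ y)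

/-- An element of a bounded lattice is *central* if it is neutral and complemented. -/
def IsCentral {L : Type*} [Lattice L] [BoundedOrder L] (a : L) : Prop :=
  IsNeutral a ∧ ∃ b : L, a ⊓ b = ⊥ ∧ a ⊔ b = ⊤

/-- `a` is an atom of the center `Cen L`. -/
def IsCenterAtom {L : Type*} [Lattice L] [BoundedOrder L] (a : L) : Prop :=
  IsCentral a ∧ a ≠ ⊥ ∧ ∀ b : L, IsCentral b → b < a → b = ⊥

/-- A bounded lattice is *directly indecomposable* if whenever it is isomorphic to a
product of two bounded lattices, one of the factors is trivial. -/
def DirectlyIndecomposable (M : Type u) [Lattice M] [BoundedOrder M] : Prop :=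
  ∀ A B : BddLat.{u}, Nonempty (M ≃o ↥A × ↥B) → Subsingleton ↥A ∨ Subsingleton ↥B

/-- A bounded lattice is *totally decomposable* if it is isomorphic to a direct product
of directly indecomposable lattices. -/
def TotallyDecomposable (M : Type u) [Lattice M] [BoundedOrder M] : Prop :=
  ∃ (ι : Type u) (F : ι → BddLat.{u}),
    (∀ i, DirectlyIndecomposable ↥(F i)) ∧ Nonempty (M ≃o ∀ i, ↥(F i))


section Basic
variable {L : Type*} [Lattice L] {a b x y : L}

lemma isNeutral_bot {L : Type*} [Lattice L] [OrderBot L] : IsNeutral (⊥ : L) := by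
  intro x y
  simp only [bot_sup_eq, bot_inf_eq, bot_sup_eq]
  exact inf_eq_left.2 (le_sup_of_le_left inf_le_left)

lemma isNeutral_top {L : Type*} [Lattice L] [OrderTop L] : IsNeutral (⊤ : L) := by
  intro x y
  simp only [top_sup_eq, top_inf_eq]
  exact (sup_eq_left.2 (le_sup_of_le_left inf_le_left)).symm

lemma IsNeutral.inf_sup_of_le (ha : IsNeutral a) (hs : x ≤ a) (t : L) :
    a ⊓ (x ⊔ t) = x ⊔ (a ⊓ t) := by
  have h := ha x t
  rw [show a ⊔ x = a from sup_eq_left.2 hs,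
      show a ⊓ (a ⊔ t) = a from inf_eq_left.2 le_sup_left,
      show a ⊓ x = x from inf_eq_right.2 hs] at h
  rw [h]
  exact sup_eq_left.2 (le_sup_of_le_left inf_le_left)

lemma IsNeutral.le_of_eq_parts (ha : IsNeutral a) (h1 : a ⊓ x = a ⊓ y) (h2 : a ⊔ x = a ⊔ y) :
    x ≤ y := by
  have hx : x ≤ (a ⊔ x) ⊓ (a ⊔ y) ⊓ (x ⊔ y) :=
    le_inf (le_inf le_sup_right (le_sup_right.trans h2.le)) le_sup_left
  have := hx.trans_eq (ha x y)
  rw [h1] at this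
  exact this.trans (sup_le (sup_le inf_le_right inf_le_right) inf_le_right)

lemma IsNeutral.eq_of_eq_parts (ha : IsNeutral a) (h1 : a ⊓ x = a ⊓ y) (h2 : a ⊔ x = a ⊔ y) :
    x = y :=
  le_antisymm (ha.le_of_eq_parts h1 h2) (ha.le_of_eq_parts h1.symm h2.symm)

lemma IsNeutral.decomp {L : Type*} [Lattice L] [BoundedOrder L] {a b : L} (ha : IsNeutral a)
    (h1 : a ⊓ b = ⊥) (h2 : a ⊔ b = ⊤) (x : L) : x = (x ⊓ a) ⊔ (x ⊓ b) := by
  have h := ha x b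
  rw [h2, inf_top_eq, h1, sup_bot_eq] at h
  refine le_antisymm ?_ (sup_le inf_le_left inf_le_left)
  calc x ≤ (a ⊔ x) ⊓ (x ⊔ b) := le_inf le_sup_right le_sup_left
    _ = a ⊓ x ⊔ x ⊓ b := h
    _ = x ⊓ a ⊔ x ⊓ b := by rw [inf_comm]

lemma isNeutral_map {M N : Type*} [Lattice M] [Lattice N] (e : M ≃o N) {a : M}
    (ha : IsNeutral a) : IsNeutral (e a) := by
  intro x y
  obtain ⟨x, rfl⟩ := e.surjective x
  obtain ⟨y, rfl⟩ := e.surjective y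
  simp only [← OrderIso.map_sup, ← OrderIso.map_inf]
  exact congrArg e (ha x y)

lemma IsNeutral.prod {M N : Type*} [Lattice M] [Lattice N] {a : M} {b : N}
    (ha : IsNeutral a) (hb : IsNeutral b) : IsNeutral ((a, b) : M × N) := fun x y =>
  Prod.ext (ha x.1 y.1) (hb x.2 y.2)

end Basic

section Central
variable {L : Type*} [Lattice L] [BoundedOrder L] {a b : L}

/-- The decomposition of `L` induced by a neutral complemented element. -/
def centralIso (ha : IsNeutral a) (h1 : a ⊓ b = ⊥) (h2 : a ⊔ b = ⊤) :
    L ≃o Set.Iic a × Set.Iic b where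
  toFun x := (⟨x ⊓ a, inf_le_right⟩, ⟨x ⊓ b, inf_le_right⟩)
  invFun p := (p.1 : L) ⊔ (p.2 : L)
  left_inv x := (ha.decomp h1 h2 x).symm
  right_inv := by
    rintro ⟨⟨s, hs⟩, ⟨t, ht⟩⟩
    have hat : a ⊓ t = ⊥ := le_bot_iff.1 (h1 ▸ inf_le_inf_left a ht)
    have hfst : (s ⊔ t) ⊓ a = s := by
      rw [inf_comm, ha.inf_sup_of_le hs, hat, sup_bot_eq]
    have hsnd : (s ⊔ t) ⊓ b = t := by
      refine ha.eq_of_eq_parts ?_ ?_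
      · rw [hat]
        exact le_bot_iff.1 ((inf_le_inf_left a inf_le_right).trans h1.le)
      · refine le_antisymm (sup_le le_sup_left ?_) (sup_le le_sup_left ?_)
        · exact (inf_le_left.trans (sup_le (hs.trans le_sup_left) le_sup_right))
        · exact le_sup_of_le_right (le_inf le_sup_right ht)
    exact Prod.ext (Subtype.ext hfst) (Subtype.ext hsnd)
  map_rel_iff' := by
    intro x y
    constructor
    · intro h
      calc x = (x ⊓ a) ⊔ (x ⊓ b) := ha.decomp h1 h2 x
        _ ≤ (y ⊓ a) ⊔ (y ⊓ b) := sup_le_sup h.1 h.2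
        _ = y := (ha.decomp h1 h2 y).symm
    · intro h
      exact ⟨Subtype.mk_le_mk.2 (inf_le_inf_right a h), Subtype.mk_le_mk.2 (inf_le_inf_right b h)⟩

lemma isCentral_compl (ha : IsCentral a) (h1 : a ⊓ b = ⊥) (h2 : a ⊔ b = ⊤) : IsCentral b := by
  refine ⟨?_, a, by rw [inf_comm, h1], by rw [sup_comm, h2]⟩
  have hb : (centralIso ha.1 h1 h2).symm ((⊥, ⊤) : Set.Iic a × Set.Iic b) = b := by
    show ((⊥ : Set.Iic a) : L) ⊔ ((⊤ : Set.Iic b) : L) = b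
    simp
  rw [← hb]
  exact isNeutral_map (centralIso ha.1 h1 h2).symm (IsNeutral.prod isNeutral_bot isNeutral_top)

lemma isCentral_coe_of_Iic {u : L} (hu : IsCentral u) {x y : Set.Iic u}
    (hx : IsNeutral x) (h1 : x ⊓ y = ⊥) (h2 : x ⊔ y = ⊤) : IsCentral (x : L) := by
  obtain ⟨v, hv1, hv2⟩ := hu.2
  have hxy : (x : L) ⊓ (y : L) = ⊥ := by
    have := congrArg (Subtype.val) h1; simpa using this
  have hxy2 : (x : L) ⊔ (y : L) = u := by
    have := congrArg (Subtype.val) h2; simpa using this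
  constructor
  · have hb : (centralIso hu.1 hv1 hv2).symm ((x, ⊥) : Set.Iic u × Set.Iic v) = (x : L) := by
      show (x : L) ⊔ ((⊥ : Set.Iic v) : L) = (x : L)
      simp
    rw [← hb]
    exact isNeutral_map (centralIso hu.1 hv1 hv2).symm (IsNeutral.prod hx isNeutral_bot)
  · refine ⟨(y : L) ⊔ v, ?_, ?_⟩
    · have h3 : u ⊓ ((y : L) ⊔ v) = (y : L) := by
        rw [hu.1.inf_sup_of_le y.2, hv1, sup_bot_eq]
      refine le_bot_iff.1 ?_
      calc (x : L) ⊓ ((y : L) ⊔ v) ≤ (x : L) ⊓ (u ⊓ ((y : L) ⊔ v)) :=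
            le_inf inf_le_left (inf_le_inf_right _ x.2)
        _ = (x : L) ⊓ (y : L) := by rw [h3]
        _ = ⊥ := hxy
    · rw [← sup_assoc, hxy2, hv2]

end Central

lemma mySubsTopBot {M : Type*} [PartialOrder M] [BoundedOrder M]
    (h : (⊤ : M) ≤ ⊥) : Subsingleton M :=
  ⟨fun x y => le_antisymm ((le_top.trans h).trans bot_le) ((le_top.trans h).trans bot_le)⟩

section Main
variable {L : Type u} [CompleteLattice L]

lemma exists_centerAtom
    (hCpl : ∀ S : Set L, (∀ a ∈ S, IsCentral a) → IsCentral (sSup S) ∧ IsCentral (sInf S))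
    {p : L} (hp : SupIrred p) : ∃ c : L, IsCenterAtom c ∧ p ≤ c := by
  set S : Set L := {b : L | IsCentral b ∧ p ≤ b} with hS
  have hcS : IsCentral (sInf S) := (hCpl S (fun a ha => ha.1)).2
  have hpc : p ≤ sInf S := le_sInf fun b hb => hb.2
  have hcne : sInf S ≠ ⊥ := by
    intro h
    rw [h, le_bot_iff] at hpc
    exact hp.1 (hpc ▸ isMin_bot)
  refine ⟨sInf S, ⟨hcS, hcne, ?_⟩, hpc⟩
  intro b hb hblt
  obtain ⟨b', h1, h2⟩ := hb.2
  have hb' : IsCentral b' := isCentral_compl hb h1 h2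
  have hsplit := hb.1.decomp h1 h2 p
  rcases hp.2 hsplit.symm with h | h
  · have hcb : sInf S ≤ b := sInf_le (show IsCentral b ∧ p ≤ b from ⟨hb, inf_eq_left.1 h⟩)
    exact absurd hcb hblt.not_ge
  · have hc : sInf S ≤ b' := sInf_le (show IsCentral b' ∧ p ≤ b' from ⟨hb', inf_eq_left.1 h⟩)
    exact le_bot_iff.1 (h1 ▸ le_inf le_rfl (hblt.le.trans hc))

lemma centerAtom_disjoint
    (hCpl : ∀ S : Set L, (∀ a ∈ S, IsCentral a) → IsCentral (sSup S) ∧ IsCentral (sInf S))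
    {i j : L} (hi : IsCenterAtom i) (hj : IsCenterAtom j) (hne : i ≠ j) : i ⊓ j = ⊥ := by
  have hc : IsCentral (i ⊓ j) := by
    have := (hCpl {i, j} (by rintro a (rfl | rfl); exacts [hi.1, hj.1])).2
    rwa [sInf_pair] at this
  rcases lt_or_eq_of_le (inf_le_left : i ⊓ j ≤ i) with hlt | heq
  · exact hi.2.2 _ hc hlt
  · have hij : i ≤ j := inf_eq_left.1 heq
    exact absurd (hj.2.2 i hi.1 (lt_of_le_of_ne hij hne)) hi.2.1

theorem aux_main {L : Type u} [CompleteLattice L]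
    (hFS : ∀ x : L, x = sSup {p : L | SupIrred p ∧ p ≤ x})
    (hCpl : ∀ S : Set L, (∀ a ∈ S, IsCentral a) → IsCentral (sSup S) ∧ IsCentral (sInf S)) :
    ∃ (ι : Type u) (F : ι → BddLat.{u}),
      (∀ i, ∀ A B : BddLat.{u}, Nonempty (↥(F i) ≃o ↥A × ↥B) →
        Subsingleton ↥A ∨ Subsingleton ↥B) ∧ Nonempty (L ≃o ∀ i, ↥(F i)) := by
  classical
  set ι := {c : L // IsCenterAtom c} with hι
  choose cp hcp1 hcp2 using fun i : ι => i.2.1.2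
  have hle_cp : ∀ i j : ι, j ≠ i → j.1 ≤ cp i := by
    intro i j hne
    have hdisj : j.1 ⊓ i.1 = ⊥ :=
      centerAtom_disjoint hCpl j.2 i.2 (fun h => hne (Subtype.ext h))
    calc j.1 = (j.1 ⊓ i.1) ⊔ (j.1 ⊓ cp i) := i.2.1.1.decomp (hcp1 i) (hcp2 i) j.1
      _ = j.1 ⊓ cp i := by rw [hdisj, bot_sup_eq]
      _ ≤ cp i := inf_le_right
  let φ : L → ∀ i : ι, Set.Iic i.1 := fun x i => ⟨x ⊓ i.1, inf_le_right⟩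
  let ψ : (∀ i : ι, Set.Iic i.1) → L := fun s => ⨆ i, (s i : L)
  have hψφ : ∀ x, ψ (φ x) = x := by
    intro x
    refine le_antisymm (iSup_le fun i => inf_le_left) ?_
    conv_lhs => rw [hFS x]
    refine sSup_le ?_
    rintro p ⟨hp, hpx⟩
    obtain ⟨c, hc, hpc⟩ := exists_centerAtom hCpl hp
    exact le_trans (le_inf hpx hpc) (le_iSup (fun i : ι => ((φ x i : L))) ⟨c, hc⟩)
  have hφψ : ∀ s, φ (ψ s) = s := by
    intro s
    funext i
    refine Subtype.ext ?_
    show (⨆ j, (s j : L)) ⊓ i.1 = (s i : L)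
    refine le_antisymm ?_ (le_inf (le_iSup (fun j : ι => (s j : L)) i) (s i).2)
    have hub : (⨆ j, (s j : L)) ≤ (s i : L) ⊔ cp i := by
      refine iSup_le fun j => ?_
      by_cases hji : j = i
      · subst hji; exact le_sup_left
      · exact le_sup_of_le_right ((s j).2.trans (hle_cp i j hji))
    calc (⨆ j, (s j : L)) ⊓ i.1 = i.1 ⊓ (⨆ j, (s j : L)) := inf_comm _ _
      _ ≤ i.1 ⊓ ((s i : L) ⊔ cp i) := inf_le_inf_left _ hub
      _ = (s i : L) ⊔ (i.1 ⊓ cp i) := i.2.1.1.inf_sup_of_le (s i).2 _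
      _ = (s i : L) := by rw [hcp1 i, sup_bot_eq]
  refine ⟨ι, fun i : ι => BddLat.of ↥(Set.Iic i.1), ?_, Nonempty.intro ?_⟩
  · rintro i A B ⟨e'⟩
    have e : Set.Iic i.1 ≃o ↥A × ↥B := e'
    set a0 : Set.Iic i.1 := e.symm (⊤, ⊥) with ha0
    have hinf : a0 ⊓ e.symm (⊥, ⊤) = ⊥ := by
      rw [ha0, ← e.symm.map_inf]
      have : ((⊤, ⊥) : ↥A × ↥B) ⊓ (⊥, ⊤) = ⊥ := by
        show ((⊤ : ↥A) ⊓ ⊥, (⊥ : ↥B) ⊓ ⊤) = (⊥, ⊥)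
        simp
      rw [this, e.symm.map_bot]
    have hsup : a0 ⊔ e.symm (⊥, ⊤) = ⊤ := by
      rw [ha0, ← e.symm.map_sup]
      have : ((⊤, ⊥) : ↥A × ↥B) ⊔ (⊥, ⊤) = ⊤ := by
        show ((⊤ : ↥A) ⊔ ⊥, (⊥ : ↥B) ⊔ ⊤) = (⊤, ⊤)
        simp
      rw [this, e.symm.map_top]
    have hn : IsNeutral a0 :=
      isNeutral_map e.symm (IsNeutral.prod isNeutral_top isNeutral_bot)
    have hcen : IsCentral (a0 : L) := isCentral_coe_of_Iic i.2.1 hn hinf hsup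
    by_cases hcase : (a0 : L) = i.1
    · right
      have htop : a0 = ⊤ := Subtype.ext hcase
      have h1 : e a0 = (⊤, ⊥) := e.apply_symm_apply _
      rw [htop, e.map_top] at h1
      exact mySubsTopBot (congrArg Prod.snd h1).le
    · left
      have hbot : (a0 : L) = ⊥ :=
        i.2.2.2 _ hcen (lt_of_le_of_ne a0.2 hcase)
      have hbot' : a0 = ⊥ := Subtype.ext hbot
      have h1 : e a0 = (⊤, ⊥) := e.apply_symm_apply _
      rw [hbot', e.map_bot] at h1
      exact mySubsTopBot (congrArg Prod.fst h1).ge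
  · exact
      { toFun := φ, invFun := ψ, left_inv := hψφ, right_inv := hφψ,
        map_rel_iff' := by
          intro x y
          constructor
          · intro h
            calc x = ψ (φ x) := (hψφ x).symm
              _ ≤ ψ (φ y) := iSup_mono fun i => Subtype.coe_le_coe.2 (h i)
              _ = y := hψφ y
          · intro h i
            exact Subtype.mk_le_mk.2 (inf_le_inf_right _ h) }

end Main


/-- A finitely spatial complete lattice whose center is a complete atomistic
sublattice is totally decomposable. -/
theorem totallyDecomposable_of_finitelySpatial {L : Type u} [CompleteLattice L]
    (hFS : ∀ x : L, x = sSup {p : L | SupIrred p ∧ p ≤ x})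
    (hCpl : ∀ S : Set L, (∀ a ∈ S, IsCentral a) → IsCentral (sSup S) ∧ IsCentral (sInf S))
    (hAtic : ∀ a : L, IsCentral a → a = sSup {u : L | IsCenterAtom u ∧ u ≤ a}) :
    TotallyDecomposable L := by
  obtain ⟨ι, F, h1, h2⟩ := aux_main hFS hCpl
  exact ⟨ι, F, h1, h2⟩
end

section
/- Let L be a finitely bi-spatial complete lattice. For x ∈ L, the central cover e(x) is the least central element above x (which exists since Cen(L) is a complete sublattice). Then Cen(L) is an atomistic Boolean lattice whose atoms are exactly the elements e(p) for p join-irreducible in L. -/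
universe u

section NeutralLemmas
variable {L : Type*} [Lattice L] {a : L}

lemma IsNeutral.dual (h : IsNeutral a) : IsNeutral (OrderDual.toDual a) :=
  fun x y => (h (OrderDual.ofDual x) (OrderDual.ofDual y)).symm

lemma IsNeutral.inf_sup (h : IsNeutral a) (x y : L) :
    a ⊓ (x ⊔ y) = a ⊓ x ⊔ a ⊓ y := by
  set u := a ⊓ x ⊔ a ⊓ y with hu
  have hua : u ≤ a := sup_le inf_le_left inf_le_left
  have h1 : a ⊓ (x ⊔ y) = a ⊓ (u ⊔ x ⊓ y) := by
    calc a ⊓ (x ⊔ y) = a ⊓ ((a ⊔ x) ⊓ (a ⊔ y)) ⊓ (x ⊔ y) := by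
          rw [inf_eq_left.2 (le_inf le_sup_left le_sup_left)]
      _ = a ⊓ ((a ⊔ x) ⊓ (a ⊔ y) ⊓ (x ⊔ y)) := by rw [inf_assoc]
      _ = a ⊓ (u ⊔ x ⊓ y) := by rw [h x y]
  have h2 := h u (x ⊓ y)
  rw [sup_eq_left.2 hua, inf_eq_right.2 hua, inf_eq_left.2 (le_sup_left : a ≤ a ⊔ x ⊓ y)] at h2
  have e3 : a ⊓ (x ⊓ y) ≤ u := le_trans (inf_le_inf_left a inf_le_left) le_sup_left
  rw [sup_eq_left.2 e3, sup_eq_left.2 (inf_le_left : u ⊓ (x ⊓ y) ≤ u)] at h2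
  rw [h1, h2]

lemma IsNeutral.sup_inf (h : IsNeutral a) (x y : L) :
    a ⊔ x ⊓ y = (a ⊔ x) ⊓ (a ⊔ y) :=
  h.dual.inf_sup (OrderDual.toDual x) (OrderDual.toDual y)

lemma IsNeutral.cancel (h : IsNeutral a) {s t : L}
    (h1 : a ⊓ s = a ⊓ t) (h2 : a ⊔ s = a ⊔ t) : s = t := by
  have hst := h s t
  have hL : s ≤ (a ⊔ s) ⊓ (a ⊔ t) ⊓ (s ⊔ t) :=
    le_inf (le_inf le_sup_right (h2 ▸ le_sup_right)) le_sup_left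
  have hR : a ⊓ s ⊔ a ⊓ t ⊔ s ⊓ t ≤ s :=
    sup_le (sup_le inf_le_right (h1 ▸ inf_le_right)) inf_le_left
  have hs : s = a ⊓ s ⊔ a ⊓ t ⊔ s ⊓ t := le_antisymm (hst ▸ hL) hR
  have hts := h t s
  have hL' : t ≤ (a ⊔ t) ⊓ (a ⊔ s) ⊓ (t ⊔ s) :=
    le_inf (le_inf le_sup_right (h2 ▸ le_sup_right)) le_sup_left
  have hR' : a ⊓ t ⊔ a ⊓ s ⊔ t ⊓ s ≤ t :=
    sup_le (sup_le inf_le_right (h1 ▸ inf_le_right)) inf_le_left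
  have ht : t = a ⊓ t ⊔ a ⊓ s ⊔ t ⊓ s := le_antisymm (hts ▸ hL') hR'
  refine le_antisymm ?_ ?_
  · exact hs.le.trans (sup_le (sup_le (h1 ▸ inf_le_right) inf_le_right) inf_le_right)
  · exact ht.le.trans (sup_le (sup_le (h1 ▸ inf_le_right) inf_le_right) inf_le_right)

end NeutralLemmas

/-- A lattice is *finitely spatial* if every element is the join of the
join-irreducible elements below it. -/
def FinitelySpatial (L : Type*) [Lattice L] : Prop :=
  ∀ x : L, IsLUB {p : L | SupIrred p ∧ p ≤ x} x

/-- A lattice is *dually finitely spatial* if every element is the meet of the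
meet-irreducible elements above it. -/
def DuallyFinitelySpatial (L : Type*) [Lattice L] : Prop :=
  ∀ x : L, IsGLB {u : L | InfIrred u ∧ x ≤ u} x

section Bounded
variable {L : Type*} [Lattice L] [BoundedOrder L] {a b : L}

lemma IsNeutral.decomp_s12 (h : IsNeutral a) (hb : a ⊓ b = ⊥) (ht : a ⊔ b = ⊤) (x : L) :
    x = x ⊓ a ⊔ x ⊓ b := by
  set t := x ⊓ a ⊔ x ⊓ b with hdef
  refine (h.cancel ?_ ?_).symm
  · -- a ⊓ t = a ⊓ x
    rw [hdef, h.inf_sup, inf_comm x a, inf_comm x b, ← inf_assoc, ← inf_assoc, inf_idem,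
      hb, bot_inf_eq, sup_bot_eq]
  · -- a ⊔ t = a ⊔ x
    rw [hdef, ← sup_assoc, sup_eq_left.2 (inf_le_right : x ⊓ a ≤ a),
      inf_comm x b, h.sup_inf b x, ht, top_inf_eq]

lemma IsNeutral.decomp' (h : IsNeutral a) (hb : a ⊓ b = ⊥) (ht : a ⊔ b = ⊤) (x : L) :
    x = (x ⊔ a) ⊓ (x ⊔ b) :=
  h.dual.decomp_s12 (congrArg OrderDual.toDual ht) (congrArg OrderDual.toDual hb)
    (OrderDual.toDual x)

lemma supIrred_split (h : IsNeutral a) (hb : a ⊓ b = ⊥) (ht : a ⊔ b = ⊤)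
    {p : L} (hp : SupIrred p) : p ≤ a ∨ p ≤ b := by
  rcases hp.2 (h.decomp_s12 hb ht p).symm with h1 | h1
  · exact Or.inl (h1 ▸ inf_le_right)
  · exact Or.inr (h1 ▸ inf_le_right)

lemma infIrred_split (h : IsNeutral a) (hb : a ⊓ b = ⊥) (ht : a ⊔ b = ⊤)
    {u : L} (hu : InfIrred u) : a ≤ u ∨ b ≤ u := by
  rcases hu.2 (h.decomp' hb ht u).symm with h1 | h1
  · exact Or.inl (h1 ▸ le_sup_right)
  · exact Or.inr (h1 ▸ le_sup_right)

end Bounded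

section Complete
variable {L : Type*} [CompleteLattice L]
variable (hFS : FinitelySpatial L) (hDFS : DuallyFinitelySpatial L)
variable {m m' : L}

-- `biSplit` hypotheses
variable (hbot : m ⊓ m' = ⊥) (htop : m ⊔ m' = ⊤)
variable (hS : ∀ p : L, SupIrred p → p ≤ m ∨ p ≤ m')
variable (hI : ∀ u : L, InfIrred u → m ≤ u ∨ m' ≤ u)

include hFS hS in
lemma decomp_of_split (z : L) : z = z ⊓ m ⊔ z ⊓ m' := by
  refine le_antisymm ?_ (sup_le inf_le_left inf_le_left)
  refine (hFS z).2 fun p hp => ?_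
  rcases hS p hp.1 with h | h
  · exact le_sup_of_le_left (le_inf hp.2 h)
  · exact le_sup_of_le_right (le_inf hp.2 h)

include hFS hDFS hS hI in
lemma distrib_of_split (x y : L) : m ⊓ (x ⊔ y) = m ⊓ x ⊔ m ⊓ y := by
  refine le_antisymm ?_ (sup_le (inf_le_inf_left _ le_sup_left) (inf_le_inf_left _ le_sup_right))
  refine (hDFS (m ⊓ x ⊔ m ⊓ y)).2 fun u hu => ?_
  rcases hI u hu.1 with h | h
  · exact inf_le_left.trans h
  · refine inf_le_right.trans (sup_le ?_ ?_)
    · calc x = x ⊓ m ⊔ x ⊓ m' := decomp_of_split hFS hS x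
        _ ≤ u := sup_le (((inf_comm x m).le.trans le_sup_left).trans hu.2) (inf_le_right.trans h)
    · calc y = y ⊓ m ⊔ y ⊓ m' := decomp_of_split hFS hS y
        _ ≤ u := sup_le (((inf_comm y m).le.trans le_sup_right).trans hu.2) (inf_le_right.trans h)

include hFS hDFS hbot htop hS hI in
lemma neutral_of_split : IsNeutral m := by
  have hbot' : m' ⊓ m = ⊥ := by rw [inf_comm]; exact hbot
  have htop' : m' ⊔ m = ⊤ := by rw [sup_comm]; exact htop
  have hS' : ∀ p : L, SupIrred p → p ≤ m' ∨ p ≤ m := fun p hp => (hS p hp).symm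
  have hI' : ∀ u : L, InfIrred u → m' ≤ u ∨ m ≤ u := fun u hu => (hI u hu).symm
  have D := distrib_of_split hFS hDFS hS hI
  have D' := distrib_of_split hFS hDFS hS' hI'
  intro x y
  have lhsm : ((m ⊔ x) ⊓ (m ⊔ y) ⊓ (x ⊔ y)) ⊓ m = m ⊓ x ⊔ m ⊓ y := by
    rw [inf_comm _ m, ← inf_assoc, inf_eq_left.2 (le_inf le_sup_left le_sup_left), D]
  have key : ∀ z : L, m' ⊓ (m ⊔ z) ≤ z := fun z => by
    rw [D', hbot', bot_sup_eq]; exact inf_le_right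
  have lhsm' : ((m ⊔ x) ⊓ (m ⊔ y) ⊓ (x ⊔ y)) ⊓ m' = m' ⊓ x ⊓ y := by
    refine le_antisymm ?_ ?_
    · refine le_inf (le_inf inf_le_right ?_) ?_
      · exact (le_inf inf_le_right (inf_le_left.trans (inf_le_left.trans inf_le_left))).trans
          (key x)
      · exact (le_inf inf_le_right (inf_le_left.trans (inf_le_left.trans inf_le_right))).trans
          (key y)
    · refine le_inf (le_inf (le_inf ?_ ?_) ?_) (inf_le_left.trans inf_le_left)
      · exact le_sup_of_le_right (inf_le_left.trans inf_le_right)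
      · exact le_sup_of_le_right inf_le_right
      · exact le_sup_of_le_left (inf_le_left.trans inf_le_right)
  have rhsm : (m ⊓ x ⊔ m ⊓ y ⊔ x ⊓ y) ⊓ m = m ⊓ x ⊔ m ⊓ y := by
    refine le_antisymm ?_ (le_inf (sup_le le_sup_left le_sup_right |>.trans le_sup_left)
      (sup_le inf_le_left inf_le_left))
    rw [inf_comm, D, D]
    exact sup_le (sup_le (le_sup_of_le_left inf_le_right) (le_sup_of_le_right inf_le_right))
      (le_sup_of_le_left (inf_le_inf_left m inf_le_left))
  have rhsm' : (m ⊓ x ⊔ m ⊓ y ⊔ x ⊓ y) ⊓ m' = m' ⊓ x ⊓ y := by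
    refine le_antisymm ?_ (le_inf (le_sup_of_le_right
      (le_inf (inf_le_left.trans inf_le_right) inf_le_right)) (inf_le_left.trans inf_le_left))
    rw [inf_comm, D', D']
    refine sup_le (sup_le ?_ ?_) ?_
    · exact ((inf_le_inf_left m' inf_le_left).trans hbot'.le).trans bot_le
    · exact ((inf_le_inf_left m' inf_le_left).trans hbot'.le).trans bot_le
    · rw [← inf_assoc]
  calc (m ⊔ x) ⊓ (m ⊔ y) ⊓ (x ⊔ y)
      = ((m ⊔ x) ⊓ (m ⊔ y) ⊓ (x ⊔ y)) ⊓ m ⊔ ((m ⊔ x) ⊓ (m ⊔ y) ⊓ (x ⊔ y)) ⊓ m' :=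
        decomp_of_split hFS hS _
    _ = (m ⊓ x ⊔ m ⊓ y ⊔ x ⊓ y) ⊓ m ⊔ (m ⊓ x ⊔ m ⊓ y ⊔ x ⊓ y) ⊓ m' := by
        rw [lhsm, lhsm', rhsm, rhsm']
    _ = m ⊓ x ⊔ m ⊓ y ⊔ x ⊓ y := (decomp_of_split hFS hS _).symm
end Complete

section Main
variable {L : Type*} [CompleteLattice L]
variable (hFS : FinitelySpatial L) (hDFS : DuallyFinitelySpatial L)

include hFS in
lemma exists_supIrred_not_le {u : L} (hu : u ≠ ⊤) : ∃ p : L, SupIrred p ∧ ¬ p ≤ u := by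
  by_contra h
  push_neg at h
  exact hu (top_le_iff.1 ((hFS ⊤).2 fun p hp => h p hp.1))

include hDFS in
lemma exists_infIrred_not_ge {p : L} (hp : p ≠ ⊥) : ∃ u : L, InfIrred u ∧ ¬ p ≤ u := by
  by_contra h
  push_neg at h
  exact hp (le_bot_iff.1 ((hDFS ⊥).2 fun u hu => h u hu.1))

include hFS in
lemma exists_supIrred_le {x : L} (hx : x ≠ ⊥) : ∃ p : L, SupIrred p ∧ p ≤ x := by
  by_contra h
  push_neg at h
  refine hx (le_bot_iff.1 ((hFS x).2 fun p hp => absurd hp.2 (h p hp.1)))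

variable (S : Set L) (hS : ∀ a ∈ S, IsCentral a)

include hS in
lemma cinf_supSplit : ∀ p : L, SupIrred p →
    p ≤ sInf S ∨ p ≤ sSup {b : L | ∃ a ∈ S, a ⊓ b = ⊥ ∧ a ⊔ b = ⊤} := by
  intro p hp
  by_cases h : ∀ a ∈ S, p ≤ a
  · exact Or.inl (le_sInf h)
  · push_neg at h
    obtain ⟨a, ha, hpa⟩ := h
    obtain ⟨hn, b, hb1, hb2⟩ := hS a ha
    rcases supIrred_split hn hb1 hb2 hp with h' | h'
    · exact absurd h' hpa
    · exact Or.inr (h'.trans (le_sSup (show _ ∈ {b : L | ∃ a ∈ S, a ⊓ b = ⊥ ∧ a ⊔ b = ⊤} from ⟨a, ha, hb1, hb2⟩)))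

include hS in
lemma cinf_infSplit : ∀ u : L, InfIrred u →
    sInf S ≤ u ∨ sSup {b : L | ∃ a ∈ S, a ⊓ b = ⊥ ∧ a ⊔ b = ⊤} ≤ u := by
  intro u hu
  by_cases h : ∃ a ∈ S, a ≤ u
  · obtain ⟨a, ha, hau⟩ := h
    exact Or.inl ((sInf_le ha).trans hau)
  · push_neg at h
    refine Or.inr (sSup_le fun b ⟨a, ha, hb1, hb2⟩ => ?_)
    rcases infIrred_split (hS a ha).1 hb1 hb2 hu with h' | h'
    · exact absurd h' (h a ha)
    · exact h'

include hFS hDFS hS in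
lemma cinf_bot : sInf S ⊓ sSup {b : L | ∃ a ∈ S, a ⊓ b = ⊥ ∧ a ⊔ b = ⊤} = ⊥ := by
  refine le_bot_iff.1 ((hFS _).2 fun p hp => ?_)
  exfalso
  obtain ⟨hpirr, hple⟩ := hp
  have hpb : p ≠ ⊥ := fun h => hpirr.1 (isMin_iff_eq_bot.2 h)
  obtain ⟨u, hu, hpu⟩ := exists_infIrred_not_ge hDFS hpb
  have hm' : sSup {b : L | ∃ a ∈ S, a ⊓ b = ⊥ ∧ a ⊔ b = ⊤} ≤ u := by
    refine sSup_le fun b hbmem => ?_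
    obtain ⟨a, ha, hb1, hb2⟩ := hbmem
    rcases infIrred_split (hS a ha).1 hb1 hb2 hu with h' | h'
    · exact absurd ((hple.trans inf_le_left).trans ((sInf_le ha).trans h')) hpu
    · exact h'
  exact hpu ((hple.trans inf_le_right).trans hm')

include hFS hDFS hS in
lemma cinf_top : sInf S ⊔ sSup {b : L | ∃ a ∈ S, a ⊓ b = ⊥ ∧ a ⊔ b = ⊤} = ⊤ := by
  refine top_le_iff.1 ((hDFS _).2 fun u hu => ?_)
  exfalso
  obtain ⟨huirr, htu⟩ := hu
  have hne : u ≠ ⊤ := fun h => huirr.1 (isMax_iff_eq_top.2 h)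
  obtain ⟨p, hpirr, hpu⟩ := exists_supIrred_not_le hFS hne
  have hpm : p ≤ sInf S := by
    refine le_sInf fun a ha => ?_
    obtain ⟨hn, b, hb1, hb2⟩ := hS a ha
    rcases supIrred_split hn hb1 hb2 hpirr with h' | h'
    · exact h'
    · exact absurd (h'.trans ((le_sSup (show _ ∈ {b : L | ∃ a ∈ S, a ⊓ b = ⊥ ∧ a ⊔ b = ⊤} from ⟨a, ha, hb1, hb2⟩)).trans (le_sup_right.trans htu))) hpu
  exact hpu (hpm.trans (le_sup_left.trans htu))

include hFS hDFS hS in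
lemma central_sInf : IsCentral (sInf S) :=
  ⟨neutral_of_split hFS hDFS (cinf_bot hFS hDFS S hS) (cinf_top hFS hDFS S hS)
      (cinf_supSplit S hS) (cinf_infSplit S hS),
    sSup {b : L | ∃ a ∈ S, a ⊓ b = ⊥ ∧ a ⊔ b = ⊤},
    cinf_bot hFS hDFS S hS, cinf_top hFS hDFS S hS⟩

include hFS hDFS in
lemma compl_central {b c : L} (hb : IsNeutral b) (h1 : b ⊓ c = ⊥) (h2 : b ⊔ c = ⊤) :
    IsCentral c := by
  refine ⟨neutral_of_split hFS hDFS (by rwa [inf_comm]) (by rwa [sup_comm])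
    (fun p hp => (supIrred_split hb h1 h2 hp).symm)
    (fun u hu => (infIrred_split hb h1 h2 hu).symm), b, by rwa [inf_comm], by rwa [sup_comm]⟩

end Main


/-- In a finitely bi-spatial complete lattice, the center is atomistic, and its
atoms are exactly the central covers `e p = ⋀ {u central | p ≤ u}` of the
join-irreducible elements `p` of `L`. -/
theorem center_atomistic_atoms_eq_centralCovers {L : Type u} [CompleteLattice L]
    (hFS : FinitelySpatial L) (hDFS : DuallyFinitelySpatial L) :
    (∀ a : L, IsCentral a → a = sSup {u : L | IsCenterAtom u ∧ u ≤ a}) ∧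
      (∀ u : L, IsCenterAtom u ↔
        ∃ p : L, SupIrred p ∧ u = sInf {v : L | IsCentral v ∧ p ≤ v}) := by
  have ecen : ∀ p : L, IsCentral (sInf {v : L | IsCentral v ∧ p ≤ v}) := fun p =>
    central_sInf hFS hDFS _ (fun a ha => ha.1)
  have ele : ∀ p : L, p ≤ sInf {v : L | IsCentral v ∧ p ≤ v} := fun p =>
    le_sInf fun v hv => hv.2
  have eatom : ∀ p : L, SupIrred p → IsCenterAtom (sInf {v : L | IsCentral v ∧ p ≤ v}) := by
    intro p hp
    refine ⟨ecen p, ?_, ?_⟩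
    · intro h
      exact hp.1 (isMin_iff_eq_bot.2 (le_bot_iff.1 (h ▸ ele p)))
    · intro b hb hlt
      obtain ⟨hnb, c, hc1, hc2⟩ := hb
      rcases supIrred_split hnb hc1 hc2 hp with h' | h'
      · exact absurd (sInf_le (show b ∈ {v : L | IsCentral v ∧ p ≤ v} from
          ⟨⟨hnb, c, hc1, hc2⟩, h'⟩)) (not_le_of_gt hlt)
      · have hcc : IsCentral c := compl_central hFS hDFS hnb hc1 hc2
        have hec : sInf {v : L | IsCentral v ∧ p ≤ v} ≤ c :=
          sInf_le (show c ∈ {v : L | IsCentral v ∧ p ≤ v} from ⟨hcc, h'⟩)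
        exact le_bot_iff.1 (hc1 ▸ le_inf le_rfl (hlt.le.trans hec))
  constructor
  · intro a ha
    refine le_antisymm ((hFS a).2 fun p hp => ?_) (sSup_le fun u hu => hu.2)
    have hepa : sInf {v : L | IsCentral v ∧ p ≤ v} ≤ a :=
      sInf_le (show a ∈ {v : L | IsCentral v ∧ p ≤ v} from ⟨ha, hp.2⟩)
    exact (ele p).trans (le_sSup (show _ ∈ {u : L | IsCenterAtom u ∧ u ≤ a} from
      ⟨eatom p hp.1, hepa⟩))
  · intro u
    constructor
    · rintro ⟨hu, hune, hmin⟩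
      obtain ⟨p, hpirr, hpu⟩ := exists_supIrred_le hFS hune
      refine ⟨p, hpirr, ?_⟩
      have h1 : sInf {v : L | IsCentral v ∧ p ≤ v} ≤ u :=
        sInf_le (show u ∈ {v : L | IsCentral v ∧ p ≤ v} from ⟨hu, hpu⟩)
      rcases eq_or_lt_of_le h1 with h | h
      · exact h.symm
      · exact absurd (hmin _ (ecen p) h) (eatom p hpirr).2.1
    · rintro ⟨p, hp, rfl⟩
      exact eatom p hp
end
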